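/- For all finitely supported sequences v, w : ℤ² → ℂ, one has the cancellation: Im ( ∑_{(j,j1,j2,j3) ∈ R} ⟨j⟩² · [ conj(v_j)·w_{j1}·conj(w_{j2})·w_{j3} + conj(w_j)·v_{j1}·conj(w_{j2})·w_{j3} + conj(w_j)·w_{j1}·conj(v_{j2})·w_{j3} + conj(w_j)·w_{j1}·conj(w_{j2})·v_{j3} ] ) = 0; moreover this sum equals Im ( ∑_{(j,j1,j2,j3) ∈ R} (⟨j⟩² + ⟨j2⟩²) · [ conj(v_j)·w_{j1}·conj(w_{j2})·w_{j3} + conj(w_j)·v_{j1}·conj(w_{j2})·w_{j3} ] ). -/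

import Mathlib

noncomputable section

/-- The Euclidean norm squared of a lattice point in `ℤ²`. -/
def nsq (j : ℤ × ℤ) : ℤ := j.1 ^ 2 + j.2 ^ 2

/-- The Japanese bracket squared `⟨j⟩² = 1 + |j|²`, as a complex number. -/
def wt (j : ℤ × ℤ) : ℂ := ((1 + nsq j : ℤ) : ℂ)

/-- The resonance relation on quadruples in `(ℤ²)⁴`:
`j1 - j2 + j3 = j` and `|j1|² - |j2|² + |j3|² = |j|²`. -/
def Res (q : (ℤ × ℤ) × (ℤ × ℤ) × (ℤ × ℤ) × (ℤ × ℤ)) : Prop :=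
  q.2.1 - q.2.2.1 + q.2.2.2 = q.1 ∧
    nsq q.2.1 - nsq q.2.2.1 + nsq q.2.2.2 = nsq q.1

instance : DecidablePred Res := fun q => by unfold Res; infer_instance


abbrev QT := (ℤ × ℤ) × (ℤ × ℤ) × (ℤ × ℤ) × (ℤ × ℤ)

def sigmaE : QT ≃ QT where
  toFun q := (q.2.1, q.1, q.2.2.2, q.2.2.1)
  invFun q := (q.2.1, q.1, q.2.2.2, q.2.2.1)
  left_inv _ := rfl
  right_inv _ := rfl

def rhoE : QT ≃ QT where
  toFun q := (q.2.2.1, q.2.2.2, q.1, q.2.1)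
  invFun q := (q.2.2.1, q.2.2.2, q.1, q.2.1)
  left_inv _ := rfl
  right_inv _ := rfl

lemma res_sigma (q : QT) : Res (sigmaE q) ↔ Res q := by
  simp only [Res, sigmaE, Equiv.coe_fn_mk]
  constructor <;> rintro ⟨h1, h2⟩ <;>
    exact ⟨by linear_combination -h1, by linear_combination -h2⟩

lemma res_rho (q : QT) : Res (rhoE q) ↔ Res q := by
  simp only [Res, rhoE, Equiv.coe_fn_mk]
  constructor <;> rintro ⟨h1, h2⟩ <;>
    exact ⟨by linear_combination h1, by linear_combination h2⟩

lemma conj_wt (j : ℤ × ℤ) : (starRingEnd ℂ) (wt j) = wt j := by simp [wt]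

lemma wt_res {q : QT} (h : Res q) :
    wt q.2.1 + wt q.2.2.2 = wt q.1 + wt q.2.2.1 := by
  have h2 : (nsq q.2.1 : ℂ) - nsq q.2.2.1 + nsq q.2.2.2 = nsq q.1 := by
    exact_mod_cast h.2
  unfold wt; push_cast; linear_combination h2

lemma lhs_real (v w : ℤ × ℤ → ℂ)
    (hv : (Function.support v).Finite) (hw : (Function.support w).Finite) :
    (∑' q : QT,
      if Res q then
        wt q.1 *
          ((starRingEnd ℂ) (v q.1) * w q.2.1 * (starRingEnd ℂ) (w q.2.2.1) * w q.2.2.2 +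
           (starRingEnd ℂ) (w q.1) * v q.2.1 * (starRingEnd ℂ) (w q.2.2.1) * w q.2.2.2 +
           (starRingEnd ℂ) (w q.1) * w q.2.1 * (starRingEnd ℂ) (v q.2.2.1) * w q.2.2.2 +
           (starRingEnd ℂ) (w q.1) * w q.2.1 * (starRingEnd ℂ) (w q.2.2.1) * v q.2.2.2)
      else 0).im = 0 := by
  classical
  set G : QT → ℂ := fun q =>
      (starRingEnd ℂ) (v q.1) * w q.2.1 * (starRingEnd ℂ) (w q.2.2.1) * w q.2.2.2 +
      (starRingEnd ℂ) (w q.1) * v q.2.1 * (starRingEnd ℂ) (w q.2.2.1) * w q.2.2.2 +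
      (starRingEnd ℂ) (w q.1) * w q.2.1 * (starRingEnd ℂ) (v q.2.2.1) * w q.2.2.2 +
      (starRingEnd ℂ) (w q.1) * w q.2.1 * (starRingEnd ℂ) (w q.2.2.1) * v q.2.2.2 with hGdef
  -- finite support
  set K : Finset (ℤ × ℤ) := (hv.union hw).toFinset with hK
  set s : Finset QT := K ×ˢ (K ×ˢ (K ×ˢ K)) with hs
  have hzero : ∀ j : ℤ × ℤ, j ∉ K → v j = 0 ∧ w j = 0 := by
    intro j hj
    rw [hK, Set.Finite.mem_toFinset, Set.mem_union] at hj
    push_neg at hj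
    exact ⟨Function.notMem_support.mp fun h => hj.1 h,
           Function.notMem_support.mp fun h => hj.2 h⟩
  have hGsupp : ∀ q : QT, q ∉ s → G q = 0 := by
    rintro ⟨a, b, c, d⟩ hq
    rw [hs] at hq
    simp only [Finset.mem_product] at hq
    push_neg at hq
    rw [hGdef]
    by_cases h1 : a ∈ K
    · by_cases h2 : b ∈ K
      · by_cases h3 : c ∈ K
        · have h4 : d ∉ K := by tauto
          obtain ⟨e1, e2⟩ := hzero d h4
          simp [e1, e2]
        · obtain ⟨e1, e2⟩ := hzero c h3
          simp [e1, e2]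
      · obtain ⟨e1, e2⟩ := hzero b h2
        simp [e1, e2]
    · obtain ⟨e1, e2⟩ := hzero a h1
      simp [e1, e2]
  -- the four weighted summands
  set F0 : QT → ℂ := fun q => if Res q then wt q.1 * G q else 0 with hF0
  set F1 : QT → ℂ := fun q => if Res q then wt q.2.1 * G q else 0 with hF1
  set F2 : QT → ℂ := fun q => if Res q then wt q.2.2.1 * G q else 0 with hF2
  set F3 : QT → ℂ := fun q => if Res q then wt q.2.2.2 * G q else 0 with hF3
  have hsupp : ∀ (F : QT → ℂ), (∀ q, ¬ Res q → F q = 0) → (∀ q, Res q → ∃ cc : ℂ, F q = cc * G q) →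
      Summable F := by
    intro F h0 h1
    apply summable_of_ne_finset_zero (s := s)
    intro q hq
    by_cases hr : Res q
    · obtain ⟨cc, hcc⟩ := h1 q hr
      rw [hcc, hGsupp q hq, mul_zero]
    · exact h0 q hr
  have sum0 : Summable F0 := hsupp F0 (fun q hr => if_neg hr) (fun q hr => ⟨wt q.1, if_pos hr⟩)
  have sum1 : Summable F1 := hsupp F1 (fun q hr => if_neg hr) (fun q hr => ⟨wt q.2.1, if_pos hr⟩)
  have sum2 : Summable F2 := hsupp F2 (fun q hr => if_neg hr) (fun q hr => ⟨wt q.2.2.1, if_pos hr⟩)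
  have sum3 : Summable F3 := hsupp F3 (fun q hr => if_neg hr) (fun q hr => ⟨wt q.2.2.2, if_pos hr⟩)
  -- G invariance under rho
  have hGrho : ∀ q : QT, G (rhoE q) = G q := by
    intro q
    rw [hGdef]
    simp only [rhoE, Equiv.coe_fn_mk]
    ring
  -- G conjugation under sigma
  have hGsigma : ∀ q : QT, G (sigmaE q) = (starRingEnd ℂ) (G q) := by
    intro q
    rw [hGdef]
    simp only [sigmaE, Equiv.coe_fn_mk, map_add, map_mul, Complex.conj_conj]
    ring
  -- tsum F0 = tsum F2 via rho
  have e02 : ∑' q, F0 q = ∑' q, F2 q := by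
    rw [← Equiv.tsum_eq rhoE F0]
    congr 1; funext q
    show (if Res (rhoE q) then wt (rhoE q).1 * G (rhoE q) else 0)
        = (if Res q then wt q.2.2.1 * G q else 0)
    by_cases h : Res q
    · rw [if_pos ((res_rho q).mpr h), if_pos h, hGrho q]; rfl
    · rw [if_neg (fun hr => h ((res_rho q).mp hr)), if_neg h]
  have e13 : ∑' q, F1 q = ∑' q, F3 q := by
    rw [← Equiv.tsum_eq rhoE F1]
    congr 1; funext q
    show (if Res (rhoE q) then wt (rhoE q).2.1 * G (rhoE q) else 0)
        = (if Res q then wt q.2.2.2 * G q else 0)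
    by_cases h : Res q
    · rw [if_pos ((res_rho q).mpr h), if_pos h, hGrho q]; rfl
    · rw [if_neg (fun hr => h ((res_rho q).mp hr)), if_neg h]
  -- conj of tsum F0 equals tsum F1
  have ec : (starRingEnd ℂ) (∑' q, F0 q) = ∑' q, F1 q := by
    rw [starRingEnd_apply, tsum_star]
    rw [show (fun q => star (F0 q)) = fun q => (starRingEnd ℂ) (F0 q) from rfl]
    rw [← Equiv.tsum_eq sigmaE fun q => (starRingEnd ℂ) (F0 q)]
    congr 1; funext q
    show (starRingEnd ℂ) (if Res (sigmaE q) then wt (sigmaE q).1 * G (sigmaE q) else 0)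
        = (if Res q then wt q.2.1 * G q else 0)
    by_cases h : Res q
    · rw [if_pos ((res_sigma q).mpr h), if_pos h, map_mul, hGsigma q, Complex.conj_conj,
        show (sigmaE q).1 = q.2.1 from rfl, conj_wt]
    · rw [if_neg (fun hr => h ((res_sigma q).mp hr)), if_neg h, map_zero]
  -- combine: F0 + F2 = F1 + F3 pointwise (resonance weight identity)
  have hptw : ∀ q : QT, F1 q + F3 q = F0 q + F2 q := by
    intro q
    show (if Res q then wt q.2.1 * G q else 0) + (if Res q then wt q.2.2.2 * G q else 0)
        = (if Res q then wt q.1 * G q else 0) + (if Res q then wt q.2.2.1 * G q else 0)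
    by_cases h : Res q
    · simp only [if_pos h]
      rw [← add_mul, ← add_mul, wt_res h]
    · simp only [if_neg h, add_zero]
  have key : ∑' q, F1 q + ∑' q, F3 q = ∑' q, F0 q + ∑' q, F2 q := by
    rw [← sum1.tsum_add sum3, ← sum0.tsum_add sum2]
    exact tsum_congr hptw
  have hreal : (starRingEnd ℂ) (∑' q, F0 q) = ∑' q, F0 q := by
    have h2 : (2 : ℂ) * (starRingEnd ℂ) (∑' q, F0 q) = 2 * ∑' q, F0 q := by
      rw [ec]
      have : ∑' q, F1 q + ∑' q, F1 q = ∑' q, F0 q + ∑' q, F0 q := by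
        rw [show ∑' q, F1 q + ∑' q, F1 q = ∑' q, F1 q + ∑' q, F3 q by rw [e13], key,
          show ∑' q, F0 q + ∑' q, F2 q = ∑' q, F0 q + ∑' q, F0 q by rw [e02]]
      linear_combination this
    exact mul_left_cancel₀ two_ne_zero h2
  rw [← Complex.conj_eq_iff_im]
  exact hreal

lemma rhs_real (v w : ℤ × ℤ → ℂ) :
    (∑' q : QT,
      if Res q then
        (wt q.1 + wt q.2.2.1) *
          ((starRingEnd ℂ) (v q.1) * w q.2.1 * (starRingEnd ℂ) (w q.2.2.1) * w q.2.2.2 +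
           (starRingEnd ℂ) (w q.1) * v q.2.1 * (starRingEnd ℂ) (w q.2.2.1) * w q.2.2.2)
      else 0).im = 0 := by
  set f : QT → ℂ := fun q =>
    if Res q then
        (wt q.1 + wt q.2.2.1) *
          ((starRingEnd ℂ) (v q.1) * w q.2.1 * (starRingEnd ℂ) (w q.2.2.1) * w q.2.2.2 +
           (starRingEnd ℂ) (w q.1) * v q.2.1 * (starRingEnd ℂ) (w q.2.2.1) * w q.2.2.2)
      else 0 with hf
  rw [← Complex.conj_eq_iff_im]
  have key : ∀ q : QT, (starRingEnd ℂ) (f (sigmaE q)) = f q := by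
    intro q
    by_cases h : Res q
    · have hs : Res (sigmaE q) := (res_sigma q).mpr h
      rw [hf]
      simp only [if_pos hs, if_pos h]
      simp only [sigmaE, Equiv.coe_fn_mk]
      simp only [map_mul, map_add, Complex.conj_conj, conj_wt]
      rw [wt_res h]
      ring
    · have hs : ¬ Res (sigmaE q) := fun hr => h ((res_sigma q).mp hr)
      rw [hf]
      simp only [if_neg hs, if_neg h, map_zero]
  calc (starRingEnd ℂ) (∑' q, f q)
      = ∑' q, (starRingEnd ℂ) (f q) := by
        rw [starRingEnd_apply, tsum_star]; rfl
    _ = ∑' q, (starRingEnd ℂ) (f (sigmaE q)) :=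
        (Equiv.tsum_eq sigmaE fun q => (starRingEnd ℂ) (f q)).symm
    _ = ∑' q, f q := by simp only [key]

/-- Second observation: for finitely supported `v, w : ℤ² → ℂ`, the `⟨j⟩²`-weighted
resonant form with one `v`-entry in each of the four slots has vanishing imaginary part,
and moreover it equals the `(⟨j⟩² + ⟨j₂⟩²)`-weighted form with the `v`-entry in the first
two slots only. -/
theorem second_observation (v w : ℤ × ℤ → ℂ)
    (hv : (Function.support v).Finite) (hw : (Function.support w).Finite) :
    (∑' q : (ℤ × ℤ) × (ℤ × ℤ) × (ℤ × ℤ) × (ℤ × ℤ),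
      if Res q then
        wt q.1 *
          ((starRingEnd ℂ) (v q.1) * w q.2.1 * (starRingEnd ℂ) (w q.2.2.1) * w q.2.2.2 +
           (starRingEnd ℂ) (w q.1) * v q.2.1 * (starRingEnd ℂ) (w q.2.2.1) * w q.2.2.2 +
           (starRingEnd ℂ) (w q.1) * w q.2.1 * (starRingEnd ℂ) (v q.2.2.1) * w q.2.2.2 +
           (starRingEnd ℂ) (w q.1) * w q.2.1 * (starRingEnd ℂ) (w q.2.2.1) * v q.2.2.2)
      else 0).im = 0 ∧
    (∑' q : (ℤ × ℤ) × (ℤ × ℤ) × (ℤ × ℤ) × (ℤ × ℤ),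
      if Res q then
        wt q.1 *
          ((starRingEnd ℂ) (v q.1) * w q.2.1 * (starRingEnd ℂ) (w q.2.2.1) * w q.2.2.2 +
           (starRingEnd ℂ) (w q.1) * v q.2.1 * (starRingEnd ℂ) (w q.2.2.1) * w q.2.2.2 +
           (starRingEnd ℂ) (w q.1) * w q.2.1 * (starRingEnd ℂ) (v q.2.2.1) * w q.2.2.2 +
           (starRingEnd ℂ) (w q.1) * w q.2.1 * (starRingEnd ℂ) (w q.2.2.1) * v q.2.2.2)
      else 0).im =
    (∑' q : (ℤ × ℤ) × (ℤ × ℤ) × (ℤ × ℤ) × (ℤ × ℤ),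
      if Res q then
        (wt q.1 + wt q.2.2.1) *
          ((starRingEnd ℂ) (v q.1) * w q.2.1 * (starRingEnd ℂ) (w q.2.2.1) * w q.2.2.2 +
           (starRingEnd ℂ) (w q.1) * v q.2.1 * (starRingEnd ℂ) (w q.2.2.1) * w q.2.2.2)
      else 0).im := by
  exact ⟨lhs_real v w hv hw, by rw [lhs_real v w hv hw, rhs_real v w]⟩
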